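/- For integers n and k with n > 4 and 4 ≤ k ≤ n − 1, every connected graph G of order n with mvd(G) = k satisfies |E(G)| ≤ n(n−1)/2 − k + 2, and this maximum is attained (e.g., by adding a vertex joined to n − k + 1 vertices of K_{n−1}). -/

import Mathlib

open SimpleGraph

variable {V : Type*}

/-- `S` is a set of vertices (not containing `x` or `y`) whose removal separates `x` from `y`:
every walk from `x` to `y` meets `S`. -/
def IsSepSet (G : SimpleGraph V) (S : Set V) (x y : V) : Prop :=
  x ∉ S ∧ y ∉ S ∧ ∀ p : G.Walk x y, ∃ v ∈ p.support, v ∈ S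

/-- `τ` is an MVD-coloring of `G`: every pair of distinct nonadjacent vertices is
separated by a monochromatic vertex cut. -/
def IsMVDColoring (G : SimpleGraph V) (τ : V → ℕ) : Prop :=
  ∀ x y : V, x ≠ y → ¬ G.Adj x y →
    ∃ S : Set V, IsSepSet G S x y ∧ ∀ u ∈ S, ∀ w ∈ S, τ u = τ w

/-- The monochromatic vertex-disconnection number: the maximum number of colors
used by an MVD-coloring of `G`. -/
noncomputable def mvd (G : SimpleGraph V) : ℕ :=
  sSup {k | ∃ τ : V → ℕ, IsMVDColoring G τ ∧ (Set.range τ).ncard = k}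

lemma range_ncard_le_card {W : Type*} [Fintype W] (τ : W → ℕ) :
    (Set.range τ).ncard ≤ Fintype.card W := by
  classical
  calc (Set.range τ).ncard = (τ '' Set.univ).ncard := by rw [Set.image_univ]
  _ ≤ (Set.univ : Set W).ncard := Set.ncard_image_le Set.finite_univ
  _ = Fintype.card W := by rw [Set.ncard_univ, Nat.card_eq_fintype_card]

lemma mvd_bddAbove {W : Type*} [Fintype W] (G : SimpleGraph W) :
    BddAbove {k | ∃ τ : W → ℕ, IsMVDColoring G τ ∧ (Set.range τ).ncard = k} :=
  ⟨Fintype.card W, by rintro k ⟨τ, _, rfl⟩; exact range_ncard_le_card τ⟩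

lemma const_isMVDColoring (G : SimpleGraph V) : IsMVDColoring G (fun _ => 0) := by
  intro x y hxy hna
  refine ⟨{x, y}ᶜ, ⟨by simp, by simp, ?_⟩, fun _ _ _ _ => rfl⟩
  intro p
  cases p with
  | nil => exact absurd rfl hxy
  | cons h q =>
    refine ⟨_, by rw [Walk.support_cons]; exact List.mem_cons_of_mem _ q.start_mem_support, ?_⟩
    simp only [Set.mem_compl_iff, Set.mem_insert_iff, Set.mem_singleton_iff]
    rintro (rfl | rfl)
    · exact G.irrefl h
    · exact hna h

lemma sep_of_nbhd {G : SimpleGraph V} {u x : V} {S : Set V}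
    (hN : ∀ z, G.Adj u z → z ∈ S) (hu : u ∉ S) (hx : x ∉ S) (hxu : x ≠ u) :
    IsSepSet G S u x ∧ IsSepSet G S x u := by
  have h1 : ∀ p : G.Walk u x, ∃ v ∈ p.support, v ∈ S := by
    intro p
    cases p with
    | nil => exact absurd rfl hxu.symm
    | cons h q =>
      exact ⟨_, by rw [Walk.support_cons]; exact List.mem_cons_of_mem _ q.start_mem_support,
        hN _ h⟩
  refine ⟨⟨hu, hx, h1⟩, hx, hu, fun p => ?_⟩
  obtain ⟨v, hv, hvS⟩ := h1 p.reverse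
  rw [Walk.support_reverse, List.mem_reverse] at hv
  exact ⟨v, hv, hvS⟩

lemma edge_compl_count {W : Type*} [Fintype W] (G : SimpleGraph W) :
    G.edgeSet.ncard + Gᶜ.edgeSet.ncard = (Fintype.card W).choose 2 := by
  classical
  have h1 : G.edgeSet ∪ Gᶜ.edgeSet = (⊤ : SimpleGraph W).edgeSet := by
    rw [← edgeSet_sup, sup_compl_eq_top]
  have hd : Disjoint G.edgeSet Gᶜ.edgeSet := (disjoint_edgeSet).2 disjoint_compl_right
  have h2 := Set.ncard_union_eq hd (Set.toFinite _) (Set.toFinite _)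
  rw [h1] at h2
  rw [← h2, ← Nat.card_coe_set_eq, edgeSet_top, Nat.card_eq_fintype_card]
  convert Sym2.card_subtype_not_diag using 1
  · exact Fintype.card_congr (Equiv.subtypeEquivRight (fun e => by simp))

lemma key_bound {W : Type*} [Fintype W] {G : SimpleGraph W} (hG : G.Connected)
    {x y : W} (hxy : x ≠ y) (hna : ¬ G.Adj x y) {τ : W → ℕ} (hτ : IsMVDColoring G τ) :
    (Set.range τ).ncard ≤ Gᶜ.edgeSet.ncard + 2 := by
  classical
  obtain ⟨S, ⟨hxS, hyS, hsep⟩, hmono⟩ := hτ x y hxy hna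
  obtain ⟨p0⟩ := hG.preconnected x y
  obtain ⟨s0, _, hs0⟩ := hsep p0
  set A : Set W := {v | ∃ p : G.Walk x v, ∀ u ∈ p.support, u ∉ S} with hA
  set B : Set W := (S ∪ A)ᶜ with hB
  have hxA : x ∈ A := ⟨Walk.nil, by
    intro u hu
    rw [Walk.support_nil, List.mem_singleton] at hu
    subst hu; exact hxS⟩
  have hyA : y ∉ A := by
    rintro ⟨p, hp⟩
    obtain ⟨v, hv, hvS⟩ := hsep p
    exact hp v hv hvS
  have hyB : y ∈ B := by
    simp only [hB, Set.mem_compl_iff, Set.mem_union]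
    tauto
  have hdisjAB : ∀ v ∈ A, v ∉ B := by
    intro v hv hv'
    rw [hB, Set.mem_compl_iff, Set.mem_union] at hv'
    tauto
  -- no edges between A and B
  have hAB : ∀ a ∈ A, ∀ b ∈ B, ¬ G.Adj a b := by
    rintro a ⟨p, hp⟩ b hb hadj
    rw [hB, Set.mem_compl_iff, Set.mem_union] at hb
    push_neg at hb
    refine hb.2 ⟨p.concat hadj, ?_⟩
    intro u hu
    rw [Walk.support_concat, List.mem_append, List.mem_singleton] at hu
    rcases hu with hu | rfl
    · exact hp u hu
    · exact hb.1
  -- color count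
  have hcover : (Set.univ : Set W) = S ∪ A ∪ B := by
    rw [hB, Set.union_compl_self]
  have hτS : (τ '' S).ncard ≤ 1 := by
    have hsub : τ '' S ⊆ {τ s0} := by
      rintro _ ⟨w, hw, rfl⟩
      exact Set.mem_singleton_iff.2 (hmono w hw s0 hs0)
    calc (τ '' S).ncard ≤ ({τ s0} : Set ℕ).ncard :=
          Set.ncard_le_ncard hsub (Set.finite_singleton _)
      _ = 1 := Set.ncard_singleton _
  have hcol : (Set.range τ).ncard ≤ 1 + A.ncard + B.ncard := by
    have hr : Set.range τ = τ '' S ∪ τ '' A ∪ τ '' B := by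
      rw [← Set.image_union, ← Set.image_union, ← hcover, Set.image_univ]
    rw [hr]
    calc (τ '' S ∪ τ '' A ∪ τ '' B).ncard
        ≤ (τ '' S ∪ τ '' A).ncard + (τ '' B).ncard :=
          Set.ncard_union_le _ _
      _ ≤ (τ '' S).ncard + (τ '' A).ncard + (τ '' B).ncard := by
          have := Set.ncard_union_le (τ '' S) (τ '' A)
          omega
      _ ≤ 1 + A.ncard + B.ncard := by
          have h1 := Set.ncard_image_le (f := τ) (s := A) (Set.toFinite _)
          have h2 := Set.ncard_image_le (f := τ) (s := B) (Set.toFinite _)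
          omega
  -- non-edge count
  set T1 : Set (Sym2 W) := (fun a => s(a, y)) '' A with hT1
  set T2 : Set (Sym2 W) := (fun b => s(x, b)) '' B with hT2
  have hc1 : T1.ncard = A.ncard := Set.ncard_image_of_injective _ (fun a b h => by
    simpa using Sym2.congr_left.mp h)
  have hc2 : T2.ncard = B.ncard := Set.ncard_image_of_injective _ (fun a b h => by
    simpa using Sym2.congr_right.mp h)
  have hinter : T1 ∩ T2 = {s(x, y)} := by
    ext e
    constructor
    · rintro ⟨⟨a, ha, rfl⟩, ⟨b, hb, heq⟩⟩
      rw [Sym2.eq_iff] at heq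
      rcases heq with ⟨rfl, rfl⟩ | ⟨rfl, rfl⟩
      · rfl
      · exact absurd rfl hxy
    · rintro rfl
      exact ⟨⟨x, hxA, rfl⟩, ⟨y, hyB, rfl⟩⟩
  have hTsub : T1 ∪ T2 ⊆ Gᶜ.edgeSet := by
    rintro e (⟨a, ha, rfl⟩ | ⟨b, hb, rfl⟩)
    · rw [mem_edgeSet, compl_adj]
      exact ⟨fun h => (h ▸ hdisjAB a ha) hyB, hAB a ha y hyB⟩
    · rw [mem_edgeSet, compl_adj]
      exact ⟨fun h => (hdisjAB x hxA) (h ▸ hb), hAB x hxA b hb⟩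
  have hT : (T1 ∪ T2).ncard + 1 = A.ncard + B.ncard := by
    have h := Set.ncard_union_add_ncard_inter T1 T2 (Set.toFinite _) (Set.toFinite _)
    rw [hinter, Set.ncard_singleton] at h
    omega
  have hle : (T1 ∪ T2).ncard ≤ Gᶜ.edgeSet.ncard :=
    Set.ncard_le_ncard hTsub (Set.toFinite _)
  omega

lemma upper_bound {n k : ℕ} (hn : 4 < n) (hk : 4 ≤ k) (hkn : k ≤ n - 1)
    (W : Type*) [Fintype W] (G : SimpleGraph W) (hcard : Fintype.card W = n)
    (hG : G.Connected) (hmvd : mvd G = k) :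
    G.edgeSet.ncard ≤ n * (n - 1) / 2 - k + 2 := by
  classical
  haveI hWne : Nonempty W := by
    rw [← Fintype.card_pos_iff, hcard]; omega
  by_cases hcomp : ∃ x y : W, x ≠ y ∧ ¬ G.Adj x y
  · obtain ⟨x, y, hxy, hna⟩ := hcomp
    have hne : Set.Nonempty {m | ∃ τ : W → ℕ, IsMVDColoring G τ ∧ (Set.range τ).ncard = m} := by
      refine ⟨1, fun _ => 0, const_isMVDColoring G, ?_⟩
      rw [Set.range_const, Set.ncard_singleton]
    have hmem : mvd G ∈ {m | ∃ τ : W → ℕ, IsMVDColoring G τ ∧ (Set.range τ).ncard = m} :=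
      Nat.sSup_mem hne (mvd_bddAbove G)
    rw [hmvd] at hmem
    obtain ⟨τ, hτ, hτk⟩ := hmem
    have hkey := key_bound hG hxy hna hτ
    rw [hτk] at hkey
    have hsum := edge_compl_count G
    rw [hcard, Nat.choose_two_right] at hsum
    generalize hC : n * (n - 1) / 2 = C at hsum ⊢
    omega
  · exfalso
    push_neg at hcomp
    set τ : W → ℕ := fun w => (Fintype.equivFin W w : ℕ) with hτdef
    have hinj : Function.Injective τ :=
      Fin.val_injective.comp (Fintype.equivFin W).injective
    have hτmvd : IsMVDColoring G τ := by
      intro x y hxy hna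
      exact absurd (hcomp x y hxy) hna
    have hτcard : (Set.range τ).ncard = n := by
      rw [← Set.image_univ, Set.ncard_image_of_injective _ hinj, Set.ncard_univ,
        Nat.card_eq_fintype_card, hcard]
    have : n ≤ mvd G := le_csSup (mvd_bddAbove G) ⟨τ, hτmvd, hτcard⟩
    omega

def exG (n k : ℕ) : SimpleGraph (Fin n) where
  Adj a b := a ≠ b ∧ ¬((a.val = n - 1 ∧ b.val < k - 2) ∨ (b.val = n - 1 ∧ a.val < k - 2))
  symm := ⟨by
    rintro a b ⟨h1, h2⟩
    exact ⟨h1.symm, by tauto⟩⟩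
  loopless := ⟨fun a h => h.1 rfl⟩

attribute [reducible] exG

lemma exG_compl_adj (n k : ℕ) (a b : Fin n) :
    (exG n k)ᶜ.Adj a b ↔ a ≠ b ∧
      ((a.val = n - 1 ∧ b.val < k - 2) ∨ (b.val = n - 1 ∧ a.val < k - 2)) := by
  rw [compl_adj]
  constructor
  · rintro ⟨h1, h2⟩
    refine ⟨h1, ?_⟩
    by_contra h3
    exact h2 ⟨h1, h3⟩
  · rintro ⟨h1, h2⟩
    exact ⟨h1, fun h => h.2 h2⟩

lemma exG_connected {n k : ℕ} (hn : 4 < n) (hk : 4 ≤ k) (hkn : k ≤ n - 1) :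
    (exG n k).Connected := by
  rw [connected_iff]
  refine ⟨?_, ⟨⟨0, by omega⟩⟩⟩
  have hub : ∀ v : Fin n, v ≠ ⟨k - 2, by omega⟩ → (exG n k).Adj ⟨k - 2, by omega⟩ v := by
    intro v hv
    refine ⟨fun h => hv h.symm, ?_⟩
    rintro (⟨h1, h2⟩ | ⟨h1, h2⟩)
    · simp only [] at h1
      omega
    · simp only [] at h2
      omega
  have hr : ∀ v, (exG n k).Reachable ⟨k - 2, by omega⟩ v := by
    intro v
    by_cases h : v = ⟨k - 2, by omega⟩
    · exact h ▸ Reachable.refl _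
    · exact (hub v h).reachable
  intro a b
  exact (hr a).symm.trans (hr b)

lemma exG_compl_edgeSet {n k : ℕ} (hn : 4 < n) (hk : 4 ≤ k) (hkn : k ≤ n - 1) :
    (exG n k)ᶜ.edgeSet =
      (fun v : Fin n => s((⟨n - 1, by omega⟩ : Fin n), v)) '' {v : Fin n | v.val < k - 2} := by
  ext e
  induction e with
  | _ a b =>
    rw [mem_edgeSet, exG_compl_adj]
    constructor
    · rintro ⟨h1, ⟨ha, hb⟩ | ⟨hb, ha⟩⟩
      · exact ⟨b, hb, by rw [show (⟨n - 1, by omega⟩ : Fin n) = a from Fin.ext ha.symm]⟩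
      · refine ⟨a, ha, ?_⟩
        rw [show (⟨n - 1, by omega⟩ : Fin n) = b from Fin.ext hb.symm]
        exact Sym2.eq_swap
    · rintro ⟨v, hv, heq⟩
      rw [Sym2.eq_iff] at heq
      rcases heq with ⟨h1, h2⟩ | ⟨h1, h2⟩
      · subst h2
        simp only [Set.mem_setOf_eq] at hv
        rw [← h1]
        refine ⟨?_, Or.inl ⟨rfl, hv⟩⟩
        intro hcon
        have hvv : v.val = n - 1 := by rw [← hcon]
        omega
      · subst h2
        simp only [Set.mem_setOf_eq] at hv
        rw [← h1]
        refine ⟨?_, Or.inr ⟨rfl, hv⟩⟩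
        intro hcon
        have hvv : v.val = n - 1 := by rw [hcon]
        omega

lemma exG_compl_ncard {n k : ℕ} (hn : 4 < n) (hk : 4 ≤ k) (hkn : k ≤ n - 1) :
    (exG n k)ᶜ.edgeSet.ncard = k - 2 := by
  rw [exG_compl_edgeSet hn hk hkn]
  rw [Set.ncard_image_of_injective _ (fun a b h => Sym2.congr_right.mp h)]
  have hset : {v : Fin n | v.val < k - 2} =
      Fin.castLE (by omega : k - 2 ≤ n) '' Set.univ := by
    ext v
    simp only [Set.mem_setOf_eq, Set.image_univ, Set.mem_range]
    constructor
    · intro hv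
      exact ⟨⟨v.val, hv⟩, Fin.ext rfl⟩
    · rintro ⟨w, rfl⟩
      exact w.isLt
  rw [hset, Set.ncard_image_of_injective _ (Fin.castLE_injective _), Set.ncard_univ,
    Nat.card_eq_fintype_card, Fintype.card_fin]

/-- The extremal coloring of `exG n k`. -/
def exτ (n k : ℕ) : Fin n → ℕ := fun v =>
  if v.val = n - 1 then 0 else if v.val < k - 2 then v.val + 1 else k - 1

lemma exτ_isMVD {n k : ℕ} (hn : 4 < n) (hk : 4 ≤ k) (hkn : k ≤ n - 1) :
    IsMVDColoring (exG n k) (exτ n k) := by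
  intro x y hxy hna
  set S : Set (Fin n) := {v | v.val ≠ n - 1 ∧ ¬(v.val < k - 2)} with hS
  have hmono : ∀ u ∈ S, ∀ w ∈ S, exτ n k u = exτ n k w := by
    rintro u ⟨hu1, hu2⟩ w ⟨hw1, hw2⟩
    simp only [exτ, if_neg hu1, if_neg hu2, if_neg hw1, if_neg hw2]
  have hP : (x.val = n - 1 ∧ y.val < k - 2) ∨ (y.val = n - 1 ∧ x.val < k - 2) := by
    by_contra hcon
    exact hna ⟨hxy, hcon⟩
  have hNbhd : ∀ u : Fin n, u.val = n - 1 → ∀ z, (exG n k).Adj u z → z ∈ S := by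
    intro u hu z ⟨hz1, hz2⟩
    constructor
    · intro hzval
      exact hz1.symm (Fin.ext (hzval.trans hu.symm))
    · intro hzk
      exact hz2 (Or.inl ⟨hu, hzk⟩)
  rcases hP with ⟨hx1, hy1⟩ | ⟨hy1, hx1⟩
  · refine ⟨S, ?_, hmono⟩
    have hxnS : x ∉ S := fun h => h.1 hx1
    have hynS : y ∉ S := fun h => h.2 hy1
    exact (sep_of_nbhd (hNbhd x hx1) hxnS hynS hxy.symm).1
  · refine ⟨S, ?_, hmono⟩
    have hynS : y ∉ S := fun h => h.1 hy1
    have hxnS : x ∉ S := fun h => h.2 hx1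
    exact (sep_of_nbhd (hNbhd y hy1) hynS hxnS hxy).2

lemma exτ_range {n k : ℕ} (hn : 4 < n) (hk : 4 ≤ k) (hkn : k ≤ n - 1) :
    (Set.range (exτ n k)).ncard = k := by
  have hr : Set.range (exτ n k) = ↑(Finset.range k) := by
    ext m
    simp only [Set.mem_range, Finset.coe_range, Set.mem_Iio]
    constructor
    · rintro ⟨v, rfl⟩
      simp only [exτ]
      split_ifs with h1 h2
      · omega
      · omega
      · omega
    · intro hm
      rcases Nat.eq_zero_or_pos m with rfl | hm0
      · exact ⟨⟨n - 1, by omega⟩, by simp [exτ]⟩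
      rcases eq_or_lt_of_le (Nat.le_sub_one_of_lt hm) with he | hlt
      · -- m = k - 1
        refine ⟨⟨k - 2, by omega⟩, ?_⟩
        simp only [exτ]
        rw [if_neg (by omega), if_neg (by omega)]
        omega
      · -- 0 < m < k - 1, so m - 1 < k - 2
        refine ⟨⟨m - 1, by omega⟩, ?_⟩
        simp only [exτ]
        rw [if_neg (by omega), if_pos (by omega)]
        omega
  rw [hr, Set.ncard_coe_finset, Finset.card_range]

lemma exG_mvd {n k : ℕ} (hn : 4 < n) (hk : 4 ≤ k) (hkn : k ≤ n - 1) :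
    mvd (exG n k) = k := by
  haveI : Nonempty (Fin n) := ⟨⟨0, by omega⟩⟩
  have hxy : (⟨n - 1, by omega⟩ : Fin n) ≠ ⟨0, by omega⟩ := by
    intro h
    have h2 : n - 1 = 0 := congrArg Fin.val h
    omega
  have hna : ¬ (exG n k).Adj ⟨n - 1, by omega⟩ ⟨0, by omega⟩ := by
    rintro ⟨h1, h2⟩
    refine h2 (Or.inl ⟨rfl, ?_⟩)
    show (0 : ℕ) < k - 2
    omega
  refine le_antisymm ?_ ?_
  · refine csSup_le ⟨1, fun _ => 0, const_isMVDColoring _, by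
      rw [Set.range_const, Set.ncard_singleton]⟩ ?_
    rintro m ⟨τ', hτ', rfl⟩
    have := key_bound (exG_connected hn hk hkn) hxy hna hτ'
    rw [exG_compl_ncard hn hk hkn] at this
    omega
  · exact le_csSup (mvd_bddAbove _) ⟨exτ n k, exτ_isMVD hn hk hkn, exτ_range hn hk hkn⟩

lemma exG_card {n k : ℕ} (hn : 4 < n) (hk : 4 ≤ k) (hkn : k ≤ n - 1) :
    (exG n k).edgeSet.ncard = n * (n - 1) / 2 - k + 2 := by
  have hsum := edge_compl_count (exG n k)
  rw [exG_compl_ncard hn hk hkn, Fintype.card_fin, Nat.choose_two_right] at hsum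
  have hC : n - 1 ≤ n * (n - 1) / 2 := by
    calc n - 1 = 2 * (n - 1) / 2 := by omega
    _ ≤ n * (n - 1) / 2 := by
        apply Nat.div_le_div_right
        exact Nat.mul_le_mul_right _ (by omega)
  generalize n * (n - 1) / 2 = C at hsum hC
  omega

theorem max_size_mvd_k (n k : ℕ) (hn : 4 < n) (hk : 4 ≤ k) (hkn : k ≤ n - 1) :
    (∀ (W : Type) [Fintype W] (G : SimpleGraph W), Fintype.card W = n →
        G.Connected → mvd G = k → G.edgeSet.ncard ≤ n * (n - 1) / 2 - k + 2) ∧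
      ∃ G : SimpleGraph (Fin n), G.Connected ∧ mvd G = k ∧
        G.edgeSet.ncard = n * (n - 1) / 2 - k + 2 := by
  constructor
  · intro W _ G hcard hconn hmvd
    exact upper_bound hn hk hkn W G hcard hconn hmvd
  · exact ⟨exG n k, exG_connected hn hk hkn, exG_mvd hn hk hkn, exG_card hn hk hkn⟩
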